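/- For the spherically symmetric case f_i(x) = |x − v_i|² with v_1,…,v_m ∈ ℝⁿ, the set of Pareto optima of the minimization problem (f_1,…,f_m) equals the convex hull of {v_1,…,v_m}. -/

import Mathlib

open RealInnerProductSpace

/-- Pareto optimality (minimization) for a family of objectives. -/
def ParetoMin {m : ℕ} {E : Type*} (f : Fin m → E → ℝ) (x : E) : Prop :=
  ¬∃ y : E, (∀ i, f i y ≤ f i x) ∧ ∃ j, f j y < f j x

theorem stmt_6 {n m : ℕ} (hm : 0 < m) (v : Fin m → EuclideanSpace ℝ (Fin n))
    (hv : Function.Injective v) :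
    {x : EuclideanSpace ℝ (Fin n) | ParetoMin (fun i x => ‖x - v i‖ ^ 2) x} =
      convexHull ℝ (Set.range v) := by
  ext x
  simp only [Set.mem_setOf_eq]
  constructor
  · -- Pareto ⇒ in hull; contrapositive
    intro hpar
    by_contra hx
    apply hpar
    -- project x onto the hull
    set K := convexHull ℝ (Set.range v) with hK
    have hKconv : Convex ℝ K := convex_convexHull ℝ _
    have hKclosed : IsClosed K :=
      (Set.finite_range v).isClosed_convexHull (𝕜 := ℝ)
    have hKne : K.Nonempty := ⟨v ⟨0, hm⟩, subset_convexHull ℝ _ ⟨⟨0, hm⟩, rfl⟩⟩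
    obtain ⟨p, hpK, hpmin⟩ :=
      exists_norm_eq_iInf_of_complete_convex hKne hKclosed.isComplete hKconv x
    have hchar := (norm_eq_iInf_iff_real_inner_le_zero hKconv hpK).1 hpmin
    have hxp : x ≠ p := fun h => hx (h ▸ hpK)
    have hlt : ∀ i, ‖p - v i‖ ^ 2 < ‖x - v i‖ ^ 2 := by
      intro i
      have hvi : v i ∈ K := subset_convexHull ℝ _ ⟨i, rfl⟩
      have h1 : ⟪x - p, v i - p⟫ ≤ 0 := hchar _ hvi
      have h2 : x - v i = (x - p) - (v i - p) := by abel
      have h3 : ‖x - v i‖ ^ 2 = ‖x - p‖ ^ 2 - 2 * ⟪x - p, v i - p⟫ + ‖v i - p‖ ^ 2 := by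
        rw [h2, norm_sub_sq_real]
      have h4 : (0:ℝ) < ‖x - p‖ ^ 2 :=
        pow_pos (norm_pos_iff.2 (sub_ne_zero.2 hxp)) 2
      have h5 : ‖p - v i‖ ^ 2 = ‖v i - p‖ ^ 2 := by rw [norm_sub_rev]
      linarith
    exact ⟨p, fun i => (hlt i).le, ⟨0, hm⟩, hlt _⟩
  · -- in hull ⇒ Pareto
    intro hx
    rintro ⟨y, hle, j, hltj⟩
    have hyx : y ≠ x := by
      intro h; rw [h] at hltj; exact lt_irrefl _ hltj
    rw [mem_convexHull_iff_exists_fintype] at hx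
    obtain ⟨ι, _, w, z, hw0, hw1, hz, hzx⟩ := hx
    have hle' : ∀ i, ‖y - z i‖ ^ 2 ≤ ‖x - z i‖ ^ 2 := by
      intro i
      obtain ⟨k, hk⟩ := hz i
      simpa [hk] using hle k
    -- key identity : Σ w i * (‖y - z i‖² - ‖x - z i‖²) = ‖y - x‖²
    have key : ∑ i, w i * (‖y - z i‖ ^ 2 - ‖x - z i‖ ^ 2) = ‖y - x‖ ^ 2 := by
      have hterm : ∀ i, w i * (‖y - z i‖ ^ 2 - ‖x - z i‖ ^ 2) =
          w i * ‖y - x‖ ^ 2 + 2 * ⟪y - x, w i • (x - z i)⟫ := by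
        intro i
        have h2 : y - z i = (y - x) + (x - z i) := by abel
        rw [h2, norm_add_sq_real, real_inner_smul_right]
        ring
      rw [Finset.sum_congr rfl fun i _ => hterm i, Finset.sum_add_distrib, ← Finset.mul_sum,
        ← inner_sum]
      have hsum : ∑ i, w i • (x - z i) = 0 := by
        have : ∑ i, w i • (x - z i) = (∑ i, w i) • x - ∑ i, w i • z i := by
          rw [Finset.sum_smul]
          rw [← Finset.sum_sub_distrib]
          exact Finset.sum_congr rfl fun i _ => smul_sub _ _ _
        rw [this, hw1, hzx, one_smul, sub_self]
      rw [hsum, inner_zero_right, ← Finset.sum_mul, hw1]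
      ring
    have hnonpos : ∑ i, w i * (‖y - z i‖ ^ 2 - ‖x - z i‖ ^ 2) ≤ 0 := by
      apply Finset.sum_nonpos
      intro i _
      exact mul_nonpos_of_nonneg_of_nonpos (hw0 i) (by linarith [hle' i])
    have : (0:ℝ) < ‖y - x‖ ^ 2 :=
      pow_pos (norm_pos_iff.2 (sub_ne_zero.2 hyx)) 2
    linarith [key ▸ hnonpos]
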